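/- Let X = Xᵀ and Y = Yᵀ in ℝ^{n×n} satisfy ker R_X ⊆ ker S_X and ker R_Y ⊆ ker S_Y, and let Δ := X − Y. Then 𝔇(X) − 𝔇(Y) = Δ − A_Yᵀ Δ A_X. -/

import Mathlib

open Matrix

-- The Moore–Penrose pseudoinverse of a real matrix, characterised by the four
-- Penrose equations (it exists and is unique for every real matrix).
open Classical in
noncomputable def mpinv {α β : Type*} [Fintype α] [Fintype β]
    (M : Matrix α β ℝ) : Matrix β α ℝ :=
  if h : ∃ P : Matrix β α ℝ,
      M * P * M = M ∧ P * M * P = P ∧ (M * P)ᵀ = M * P ∧ (P * M)ᵀ = P * M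
  then h.choose else 0

/-- `R_X = R + BᵀXB`. -/
noncomputable def RX {ι κ : Type*} [Fintype ι] [Fintype κ]
    (R : Matrix κ κ ℝ) (B : Matrix ι κ ℝ) (X : Matrix ι ι ℝ) : Matrix κ κ ℝ :=
  R + Bᵀ * X * B

/-- `S_X = AᵀXB + S`. -/
noncomputable def SX {ι κ : Type*} [Fintype ι] [Fintype κ]
    (A : Matrix ι ι ℝ) (B S : Matrix ι κ ℝ) (X : Matrix ι ι ℝ) : Matrix ι κ ℝ :=
  Aᵀ * X * B + S

/-- `K_X = R_X† S_Xᵀ`. -/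
noncomputable def KX {ι κ : Type*} [Fintype ι] [Fintype κ]
    (A : Matrix ι ι ℝ) (B S : Matrix ι κ ℝ) (R : Matrix κ κ ℝ) (X : Matrix ι ι ℝ) :
    Matrix κ ι ℝ :=
  mpinv (RX R B X) * (SX A B S X)ᵀ

/-- The closed-loop matrix `A_X = A - B K_X`. -/
noncomputable def AX {ι κ : Type*} [Fintype ι] [Fintype κ]
    (A : Matrix ι ι ℝ) (B S : Matrix ι κ ℝ) (R : Matrix κ κ ℝ) (X : Matrix ι ι ℝ) :
    Matrix ι ι ℝ :=
  A - B * KX A B S R X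

/-- The kernel condition `ker R_X ⊆ ker S_X`. -/
def KerCond {ι κ : Type*} [Fintype ι] [Fintype κ]
    (A : Matrix ι ι ℝ) (B S : Matrix ι κ ℝ) (R : Matrix κ κ ℝ) (X : Matrix ι ι ℝ) : Prop :=
  ∀ v : κ → ℝ, (RX R B X).mulVec v = 0 → (SX A B S X).mulVec v = 0

/-- The Riccati operator `𝔇(X) = X - AᵀXA + S_X R_X† S_Xᵀ - Q`. -/
noncomputable def DOp {ι κ : Type*} [Fintype ι] [Fintype κ]
    (A Q : Matrix ι ι ℝ) (B S : Matrix ι κ ℝ) (R : Matrix κ κ ℝ) (X : Matrix ι ι ℝ) :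
    Matrix ι ι ℝ :=
  X - Aᵀ * X * A + SX A B S X * mpinv (RX R B X) * (SX A B S X)ᵀ - Q

/-- The Riccati map `ℛ(X) = AᵀXA - S_X R_X† S_Xᵀ + Q`. -/
noncomputable def Ricc {ι κ : Type*} [Fintype ι] [Fintype κ]
    (A Q : Matrix ι ι ℝ) (B S : Matrix ι κ ℝ) (R : Matrix κ κ ℝ) (X : Matrix ι ι ℝ) :
    Matrix ι ι ℝ :=
  Aᵀ * X * A - SX A B S X * mpinv (RX R B X) * (SX A B S X)ᵀ + Q

/-- `X` is a symmetric solution of CGDARE(Σ): it is symmetric, satisfies the GDARE and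
the kernel condition `ker R_X ⊆ ker S_X`. -/
def IsCGDARESolution {ι κ : Type*} [Fintype ι] [Fintype κ]
    (A Q : Matrix ι ι ℝ) (B S : Matrix ι κ ℝ) (R : Matrix κ κ ℝ) (X : Matrix ι ι ℝ) : Prop :=
  Xᵀ = X ∧ X = Ricc A Q B S R X ∧ KerCond A B S R X

/-- The matrix `N = [[A, 0, B], [Q, -I, S], [Sᵀ, 0, R]]` of the extended symplectic pencil. -/
noncomputable def Nmat {n m : ℕ} (A Q : Matrix (Fin n) (Fin n) ℝ)
    (B S : Matrix (Fin n) (Fin m) ℝ) (R : Matrix (Fin m) (Fin m) ℝ) :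
    Matrix (Fin n ⊕ (Fin n ⊕ Fin m)) (Fin n ⊕ (Fin n ⊕ Fin m)) ℝ :=
  fromBlocks A (fromCols 0 B) (fromRows Q Sᵀ) (fromBlocks (-1) S 0 R)

/-- The matrix `M = [[I, 0, 0], [0, -Aᵀ, 0], [0, -Bᵀ, 0]]` of the extended symplectic pencil. -/
noncomputable def Mmat {n m : ℕ} (A : Matrix (Fin n) (Fin n) ℝ)
    (B : Matrix (Fin n) (Fin m) ℝ) :
    Matrix (Fin n ⊕ (Fin n ⊕ Fin m)) (Fin n ⊕ (Fin n ⊕ Fin m)) ℝ :=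
  fromBlocks 1 0 0 (fromBlocks (-Aᵀ) 0 (-Bᵀ) 0)


lemma penrose_exists {k : Type*} [Fintype k] [DecidableEq k] (M : Matrix k k ℝ) (hM : Mᵀ = M) :
    ∃ P : Matrix k k ℝ,
      M * P * M = M ∧ P * M * P = P ∧ (M * P)ᵀ = M * P ∧ (P * M)ᵀ = P * M := by
  have hH : M.IsHermitian := by
    rwa [Matrix.IsHermitian, conjTranspose_eq_transpose_of_trivial]
  set U : Matrix k k ℝ := (hH.eigenvectorUnitary : Matrix k k ℝ) with hUdef
  set d : k → ℝ := hH.eigenvalues with hd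
  have hspec : M = U * diagonal d * star U := by
    have := hH.spectral_theorem
    simpa [RCLike.ofReal_real_eq_id] using this
  have hUV : U * star U = 1 := (Unitary.mem_iff.mp hH.eigenvectorUnitary.2).2
  have hVU : star U * U = 1 := (Unitary.mem_iff.mp hH.eigenvectorUnitary.2).1
  have key : ∀ v w : k → ℝ, (U * diagonal v * star U) * (U * diagonal w * star U)
      = U * diagonal (fun i => v i * w i) * star U := by
    intro v w
    calc (U * diagonal v * star U) * (U * diagonal w * star U)
        = U * (diagonal v * ((star U * U) * (diagonal w * star U))) := by
          simp only [mul_assoc]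
      _ = U * diagonal (fun i => v i * w i) * star U := by
          rw [hVU, one_mul]
          simp only [← mul_assoc, diagonal_mul_diagonal]
  have symm : ∀ v : k → ℝ, (U * diagonal v * star U)ᵀ = U * diagonal v * star U := by
    intro v
    have h1 : star (U * diagonal v * star U) = U * diagonal v * star U := by
      simp only [StarMul.star_mul, star_star]
      rw [star_eq_conjTranspose (diagonal v), diagonal_conjTranspose]
      simp [mul_assoc]
    rw [← conjTranspose_eq_transpose_of_trivial, ← star_eq_conjTranspose]
    exact h1
  refine ⟨U * diagonal (fun i => (d i)⁻¹) * star U, ?_, ?_, ?_, ?_⟩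
  · rw [hspec, key, key]
    congr 2
    exact congrArg diagonal (funext fun i => by
      rcases eq_or_ne (d i) 0 with h | h
      · simp [h]
      · field_simp)
  · rw [hspec, key, key]
    congr 2
    exact congrArg diagonal (funext fun i => by
      rcases eq_or_ne (d i) 0 with h | h
      · simp [h]
      · field_simp)
  · rw [hspec, key, symm]
  · rw [hspec, key, symm]



section MPLemmas
variable {k : Type*} [Fintype k] [DecidableEq k]

lemma penrose_unique (M P₁ P₂ : Matrix k k ℝ)
    (h1 : M * P₁ * M = M ∧ P₁ * M * P₁ = P₁ ∧ (M * P₁)ᵀ = M * P₁ ∧ (P₁ * M)ᵀ = P₁ * M)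
    (h2 : M * P₂ * M = M ∧ P₂ * M * P₂ = P₂ ∧ (M * P₂)ᵀ = M * P₂ ∧ (P₂ * M)ᵀ = P₂ * M) :
    P₁ = P₂ := by
  obtain ⟨a1, b1, c1, d1⟩ := h1
  obtain ⟨a2, b2, c2, d2⟩ := h2
  have hMP : M * P₁ = M * P₂ := by
    calc M * P₁ = (M * P₂) * (M * P₁) := by rw [← mul_assoc, a2]
      _ = (M * P₂)ᵀ * (M * P₁)ᵀ := by rw [c2, c1]
      _ = ((M * P₁) * (M * P₂))ᵀ := by rw [transpose_mul (M * P₁) (M * P₂), c2, c1]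
      _ = (M * P₁ * M * P₂)ᵀ := by rw [mul_assoc (M * P₁) M P₂, ← mul_assoc]
      _ = (M * P₂)ᵀ := by rw [a1]
      _ = M * P₂ := c2
  have hPM : P₁ * M = P₂ * M := by
    calc P₁ * M = (P₁ * M) * (P₂ * M) := by
          rw [mul_assoc, ← mul_assoc M P₂ M, a2]
      _ = (P₁ * M)ᵀ * (P₂ * M)ᵀ := by rw [d1, d2]
      _ = ((P₂ * M) * (P₁ * M))ᵀ := by rw [transpose_mul (P₂ * M) (P₁ * M), d1, d2]
      _ = (P₂ * (M * P₁ * M))ᵀ := by simp only [mul_assoc]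
      _ = (P₂ * M)ᵀ := by rw [a1]
      _ = P₂ * M := d2
  calc P₁ = P₁ * M * P₁ := b1.symm
    _ = P₂ * M * P₁ := by rw [hPM]
    _ = P₂ * (M * P₁) := by rw [mul_assoc]
    _ = P₂ * (M * P₂) := by rw [hMP]
    _ = P₂ := by rw [← mul_assoc]; exact b2

lemma mpinv_spec (M : Matrix k k ℝ) (hM : Mᵀ = M) :
    M * mpinv M * M = M ∧ mpinv M * M * mpinv M = mpinv M ∧
      (M * mpinv M)ᵀ = M * mpinv M ∧ (mpinv M * M)ᵀ = mpinv M * M := by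
  have h := penrose_exists M hM
  rw [mpinv, dif_pos h]
  exact h.choose_spec

lemma mpinv_symm (M : Matrix k k ℝ) (hM : Mᵀ = M) : (mpinv M)ᵀ = mpinv M := by
  obtain ⟨a, b, c, d⟩ := mpinv_spec M hM
  set P := mpinv M
  have trans3 : ∀ Z W V : Matrix k k ℝ, (Z * W * V)ᵀ = Vᵀ * Wᵀ * Zᵀ := by
    intro Z W V
    simp only [transpose_mul, mul_assoc]
  refine penrose_unique M Pᵀ P ⟨?_, ?_, ?_, ?_⟩ ⟨a, b, c, d⟩
  · calc M * Pᵀ * M = Mᵀ * Pᵀ * Mᵀ := by rw [hM]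
      _ = (M * P * M)ᵀ := (trans3 M P M).symm
      _ = M := by rw [a, hM]
  · calc Pᵀ * M * Pᵀ = Pᵀ * Mᵀ * Pᵀ := by rw [hM]
      _ = (P * M * P)ᵀ := (trans3 P M P).symm
      _ = Pᵀ := by rw [b]
  · have h1 : M * Pᵀ = (P * M)ᵀ := by rw [transpose_mul, hM]
    rw [h1, transpose_transpose, d]
  · have h2 : Pᵀ * M = (M * P)ᵀ := by rw [transpose_mul, hM]
    rw [h2, transpose_transpose, c]

end MPLemmas

section KerLemmas
variable {ι κ : Type*} [Fintype ι] [Fintype κ] [DecidableEq κ]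

/-- Consequence of the kernel condition: `S_X (R_X† R_X) = S_X`. -/
lemma ker_fact (A : Matrix ι ι ℝ) (B S : Matrix ι κ ℝ) (R : Matrix κ κ ℝ)
    (X : Matrix ι ι ℝ) (hk : KerCond A B S R X) (hRs : (RX R B X)ᵀ = RX R B X) :
    SX A B S X * (mpinv (RX R B X) * RX R B X) = SX A B S X := by
  set rx := RX R B X
  set G := mpinv rx
  obtain ⟨a, -, -, -⟩ := mpinv_spec rx hRs
  have hC : rx * (1 - G * rx) = 0 := by
    rw [Matrix.mul_sub, Matrix.mul_one, ← mul_assoc, a, sub_self]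
  have hzero : SX A B S X * (1 - G * rx) = 0 := by
    ext i j
    have hv : rx.mulVec (fun t => (1 - G * rx) t j) = 0 := by
      funext i'
      have h2 := congrFun (congrFun hC i') j
      simpa [Matrix.mulVec, dotProduct, Matrix.mul_apply] using h2
    have h3 := congrFun (hk _ hv) i
    simpa [Matrix.mulVec, dotProduct, Matrix.mul_apply] using h3
  rw [Matrix.mul_sub, Matrix.mul_one] at hzero
  exact (sub_eq_zero.mp hzero).symm

end KerLemmas

/-- `𝔇(X) - 𝔇(Y) = Δ - A_Yᵀ Δ A_X` with `Δ = X - Y`. -/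
theorem stmt_9 {n m : ℕ} (hn : 0 < n) (hm : 0 < m)
    (A Q : Matrix (Fin n) (Fin n) ℝ) (B S : Matrix (Fin n) (Fin m) ℝ)
    (R : Matrix (Fin m) (Fin m) ℝ)
    (hPi : (fromBlocks Q S Sᵀ R).PosSemidef)
    (X Y : Matrix (Fin n) (Fin n) ℝ) (hX : Xᵀ = X) (hY : Yᵀ = Y)
    (hkX : KerCond A B S R X) (hkY : KerCond A B S R Y) :
    DOp A Q B S R X - DOp A Q B S R Y =
      (X - Y) - (AX A B S R Y)ᵀ * (X - Y) * AX A B S R X := by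
  classical
  -- R is symmetric
  have hR : Rᵀ = R := by
    have h2 : (fromBlocks Q S Sᵀ R)ᵀ = fromBlocks Q S Sᵀ R := by
      rw [← conjTranspose_eq_transpose_of_trivial]
      exact hPi.1
    rw [fromBlocks_transpose] at h2
    have h3 := congrArg Matrix.toBlocks₂₂ h2
    simpa [Matrix.toBlocks_fromBlocks₂₂] using h3
  have hrxs : (RX R B X)ᵀ = RX R B X := by
    simp [RX, transpose_add, transpose_mul, hX, hR, Matrix.mul_assoc]
  have hrys : (RX R B Y)ᵀ = RX R B Y := by
    simp [RX, transpose_add, transpose_mul, hY, hR, Matrix.mul_assoc]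
  have e1X := ker_fact A B S R X hkX hrxs
  have e1Y := ker_fact A B S R Y hkY hrys
  have hGx : (mpinv (RX R B X))ᵀ = mpinv (RX R B X) := mpinv_symm _ hrxs
  have hGy : (mpinv (RX R B Y))ᵀ = mpinv (RX R B Y) := mpinv_symm _ hrys
  simp only [DOp, AX, KX]
  set rx := RX R B X with hrxdef
  set ry := RX R B Y with hrydef
  set sx := SX A B S X with hsxdef
  set sy := SX A B S Y with hsydef
  set Gx := mpinv rx with hGxdef
  set Gy := mpinv ry with hGydef
  -- transposed kernel fact for X
  have e3X : rx * (Gx * sxᵀ) = sxᵀ := by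
    have h4 := congrArg transpose e1X
    rw [transpose_mul, transpose_mul, hGx, hrxs] at h4
    rw [← Matrix.mul_assoc]
    exact h4
  -- kernel fact for Y in the form we need
  have e2Y : sy * (Gy * ry) = sy := e1Y
  -- difference identities
  have hsd : Aᵀ * ((X - Y) * B) = sx - sy := by
    simp only [hsxdef, hsydef, SX, Matrix.mul_sub, Matrix.sub_mul, Matrix.mul_assoc]
    abel
  have hsd' : Bᵀ * ((X - Y) * A) = sxᵀ - syᵀ := by
    have h5 := congrArg transpose hsd
    rw [transpose_sub] at h5
    rw [← h5]
    simp only [transpose_mul, transpose_transpose, transpose_sub, hX, hY, Matrix.mul_assoc]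
  have hrd : Bᵀ * ((X - Y) * B) = rx - ry := by
    simp only [hrxdef, hrydef, RX, Matrix.mul_sub, Matrix.sub_mul, Matrix.mul_assoc]
    abel
  -- the key identity
  have u1 : Aᵀ * ((X - Y) * (B * (Gx * sxᵀ))) = (sx - sy) * (Gx * sxᵀ) := by
    rw [← hsd]
    simp only [Matrix.mul_assoc]
  have u3 : Bᵀ * ((X - Y) * (B * (Gx * sxᵀ))) = (rx - ry) * (Gx * sxᵀ) := by
    rw [← hrd]
    simp only [Matrix.mul_assoc]
  have t2 : sy * (Gy * (ry * (Gx * sxᵀ))) = sy * (Gx * sxᵀ) := by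
    calc sy * (Gy * (ry * (Gx * sxᵀ))) = (sy * (Gy * ry)) * (Gx * sxᵀ) := by
          simp only [Matrix.mul_assoc]
      _ = sy * (Gx * sxᵀ) := by rw [e2Y]
  have key : sx * (Gx * sxᵀ) - sy * (Gy * syᵀ)
      = Aᵀ * ((X - Y) * (B * (Gx * sxᵀ))) + sy * (Gy * (Bᵀ * ((X - Y) * A)))
        - sy * (Gy * (Bᵀ * ((X - Y) * (B * (Gx * sxᵀ))))) := by
    rw [u1, u3, hsd']
    simp only [Matrix.sub_mul, Matrix.mul_sub, Matrix.mul_assoc]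
    rw [e3X, t2]
    abel
  have hAyt : (A - B * (Gy * syᵀ))ᵀ = Aᵀ - sy * (Gy * Bᵀ) := by
    rw [transpose_sub, transpose_mul, transpose_mul, transpose_transpose, hGy]
    simp only [Matrix.mul_assoc]
  calc X - Aᵀ * X * A + sx * Gx * sxᵀ - Q - (Y - Aᵀ * Y * A + sy * Gy * syᵀ - Q)
      = X - Y - Aᵀ * ((X - Y) * A) + (sx * (Gx * sxᵀ) - sy * (Gy * syᵀ)) := by
        simp only [Matrix.mul_sub, Matrix.sub_mul, Matrix.mul_assoc]
        abel
    _ = X - Y - Aᵀ * ((X - Y) * A)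
        + (Aᵀ * ((X - Y) * (B * (Gx * sxᵀ))) + sy * (Gy * (Bᵀ * ((X - Y) * A)))
          - sy * (Gy * (Bᵀ * ((X - Y) * (B * (Gx * sxᵀ)))))) := by rw [key]
    _ = X - Y - (Aᵀ - sy * (Gy * Bᵀ)) * ((X - Y) * (A - B * (Gx * sxᵀ))) := by
        simp only [Matrix.mul_sub, Matrix.sub_mul, Matrix.mul_assoc]
        abel
    _ = X - Y - (A - B * (Gy * syᵀ))ᵀ * ((X - Y) * (A - B * (Gx * sxᵀ))) := by rw [hAyt]
    _ = X - Y - (A - B * (Gy * syᵀ))ᵀ * (X - Y) * (A - B * (Gx * sxᵀ)) := by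
        rw [Matrix.mul_assoc]
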